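/- arXiv:1812.11451 — 2 statements merged into one kernel-verified Lean document; each statement's English description precedes it below -/
import Mathlib

section
/- Let N ≥ 3 and set C := (2N/(N−2)) · (N/2)^{2/(N−2)} · e^{2(N−1)/(N−2)} · π^{N/(N−2)}. For every λ > 0, the function u_λ(x) = exp((N−1)/2 − λ²‖x‖²/2) on ℝ^N satisfies the equality (∫_{ℝ^N} |∇u_λ(x)|² dx)^{N/(N−2)} = C · ∫_{ℝ^N} u_λ(x)² log(u_λ(x)) dx. -/
open MeasureTheory Filter Topology

open Real in
private lemma rpow_two_eq' (t : ℝ) : t ^ (2:ℝ) = t ^ 2 := by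
  rw [show (2:ℝ) = ((2:ℕ):ℝ) by norm_num, Real.rpow_natCast]

open Real in
private lemma int_gauss0 (N : ℕ) {b : ℝ} (hb : 0 < b) :
    ∫ x : EuclideanSpace ℝ (Fin N), Real.exp (-b * ‖x‖ ^ 2) = Real.sqrt (π / b) ^ N := by
  rw [GaussianFourier.integral_rexp_neg_mul_sq_norm hb, finrank_euclideanSpace_fin,
    Real.sqrt_eq_rpow, ← Real.rpow_natCast ((π/b) ^ (1/2:ℝ)) N, ← Real.rpow_mul (by positivity)]
  congr 1
  ring

open Real in
private lemma integrable_sq_gauss {b : ℝ} (hb : 0 < b) :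
    Integrable (fun t : ℝ => t ^ 2 * Real.exp (-b * t ^ 2)) := by
  have h := integrable_rpow_mul_exp_neg_mul_sq hb (by norm_num : (-1:ℝ) < 2)
  exact (integrable_congr (Filter.Eventually.of_forall fun t => by rw [rpow_two_eq'])).mp h

open Real in
private lemma int_sq_gauss {b : ℝ} (hb : 0 < b) :
    ∫ t : ℝ, t ^ 2 * Real.exp (-b * t ^ 2) = 1 / (2 * b) * Real.sqrt (π / b) := by
  have h2 : ∫ t : ℝ, t ^ 2 * Real.exp (-b * t ^ 2)
      = 2 * ∫ t in Set.Ioi (0:ℝ), t ^ 2 * Real.exp (-b * t ^ 2) := by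
    rw [← integral_comp_abs (f := fun t => t ^ 2 * Real.exp (-b * t ^ 2))]
    simp [sq_abs]
  have h3 := integral_rpow_mul_exp_neg_mul_rpow (p := 2) (q := 2) two_pos (by norm_num) hb
  simp_rw [show ((2:ℝ)+1)/2 = 1/2 + 1 by norm_num, show (-((2:ℝ)+1)/2) = -(1+1/2) by norm_num,
    Real.Gamma_add_one (by norm_num : (1/2:ℝ) ≠ 0), Real.Gamma_one_half_eq,
    show (2:ℝ) = ((2:ℕ):ℝ) by norm_num, Real.rpow_natCast] at h3
  push_cast at h3
  rw [h2, h3, Real.rpow_neg hb.le, Real.rpow_add hb, Real.rpow_one, ← Real.sqrt_eq_rpow,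
    Real.sqrt_div Real.pi_pos.le b]
  have hsb : Real.sqrt b ≠ 0 := by positivity
  field_simp

open Real in
private lemma int_gauss2 (N : ℕ) (hN : N ≠ 0) {b : ℝ} (hb : 0 < b) :
    ∫ x : EuclideanSpace ℝ (Fin N), ‖x‖ ^ 2 * Real.exp (-b * ‖x‖ ^ 2)
      = (N : ℝ) / (2 * b) * Real.sqrt (π / b) ^ N := by
  classical
  set g : Fin N → Fin N → ℝ → ℝ :=
    fun i j t => if j = i then t ^ 2 * Real.exp (-b * t ^ 2) else Real.exp (-b * t ^ 2) with hg
  have e := (EuclideanSpace.volume_preserving_symm_measurableEquiv_toLp (Fin N)).symm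
  rw [← e.integral_comp (MeasurableEquiv.measurableEmbedding _)]
  have hnorm : ∀ v : Fin N → ℝ,
      ‖(MeasurableEquiv.toLp 2 (Fin N → ℝ)) v‖ ^ 2 = ∑ i, v i ^ 2 := by
    intro v
    rw [EuclideanSpace.norm_eq, Real.sq_sqrt (by positivity)]
    simp [sq_abs]
  have step1 : ∀ v : Fin N → ℝ,
      (∑ i, v i ^ 2) * Real.exp (-b * ∑ i, v i ^ 2) = ∑ i, ∏ j, g i j (v j) := by
    intro v
    have hexp : Real.exp (-b * ∑ j, v j ^ 2) = ∏ j, Real.exp (-b * v j ^ 2) := by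
      rw [← Real.exp_sum, Finset.mul_sum]
    rw [Finset.sum_mul]
    refine Finset.sum_congr rfl fun i _ => ?_
    have hprod : ∏ j, g i j (v j)
        = (v i ^ 2 * Real.exp (-b * v i ^ 2))
          * ∏ j ∈ Finset.univ.erase i, Real.exp (-b * v j ^ 2) := by
      rw [← Finset.mul_prod_erase Finset.univ _ (Finset.mem_univ i)]
      congr 1
      · simp [hg]
      · exact Finset.prod_congr rfl fun j hj => by simp [hg, Finset.ne_of_mem_erase hj]
    rw [hexp, ← Finset.mul_prod_erase Finset.univ _ (Finset.mem_univ i), hprod]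
    ring
  have hint : ∀ i : Fin N, Integrable (fun v : Fin N → ℝ => ∏ j, g i j (v j)) := by
    intro i
    refine Integrable.fintype_prod fun j => ?_
    by_cases h : j = i
    · simpa [hg, h] using integrable_sq_gauss hb
    · simpa [hg, h] using integrable_exp_neg_mul_sq hb
  calc ∫ v : Fin N → ℝ, ((fun x : EuclideanSpace ℝ (Fin N) => ‖x‖ ^ 2 * Real.exp (-b * ‖x‖ ^ 2))
        ((MeasurableEquiv.toLp 2 (Fin N → ℝ)) v))
      = ∫ v : Fin N → ℝ, ∑ i, ∏ j, g i j (v j) := by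
        refine integral_congr_ae (Filter.Eventually.of_forall fun v => ?_)
        simp only [hnorm]
        exact step1 v
    _ = ∑ i, ∫ v : Fin N → ℝ, ∏ j, g i j (v j) := integral_finset_sum _ fun i _ => hint i
    _ = (N : ℝ) / (2 * b) * Real.sqrt (π / b) ^ N := by
        have hval : ∀ i : Fin N, ∫ v : Fin N → ℝ, ∏ j, g i j (v j)
            = (1 / (2 * b) * Real.sqrt (π / b)) * Real.sqrt (π / b) ^ (N - 1) := by
          intro i
          rw [integral_fintype_prod_volume_eq_prod (g i),
            ← Finset.mul_prod_erase Finset.univ _ (Finset.mem_univ i)]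
          have h1 : ∫ t, g i i t = 1 / (2 * b) * Real.sqrt (π / b) := by
            simp only [hg, if_pos rfl]; exact int_sq_gauss hb
          have h2 : ∀ j ∈ Finset.univ.erase i, (∫ t, g i j t) = Real.sqrt (π / b) := by
            intro j hj
            simp only [hg, if_neg (Finset.ne_of_mem_erase hj)]
            exact integral_gaussian b
          rw [h1, Finset.prod_congr rfl h2, Finset.prod_const,
            Finset.card_erase_of_mem (Finset.mem_univ i), Finset.card_univ, Fintype.card_fin]
        simp_rw [hval]
        rw [Finset.sum_const, Finset.card_univ, Fintype.card_fin, nsmul_eq_mul]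
        obtain ⟨M, rfl⟩ := Nat.exists_eq_succ_of_ne_zero hN
        simp only [Nat.succ_sub_one, pow_succ]
        push_cast
        ring

open Real in
private lemma intE0 (N : ℕ) {b : ℝ} (hb : 0 < b) :
    Integrable (fun x : EuclideanSpace ℝ (Fin N) => Real.exp (-b * ‖x‖ ^ 2)) := by
  have h := (GaussianFourier.integrable_cexp_neg_mul_sq_norm_add
    (V := EuclideanSpace ℝ (Fin N)) (b := (b:ℂ)) (by simpa using hb) 0 0).norm
  refine h.congr (Filter.Eventually.of_forall fun v => ?_)
  simp [Complex.norm_exp, ← Complex.ofReal_pow]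

open Real in
private lemma intE2 (N : ℕ) {b : ℝ} (hb : 0 < b) :
    Integrable (fun x : EuclideanSpace ℝ (Fin N) => ‖x‖ ^ 2 * Real.exp (-b * ‖x‖ ^ 2)) := by
  have h0 := (intE0 N (half_pos hb)).const_mul (2 / b)
  refine h0.mono' ?_ (Filter.Eventually.of_forall fun x => ?_)
  · exact (((continuous_norm.pow 2).mul
      (Real.continuous_exp.comp
        (continuous_const.mul (continuous_norm.pow 2))))).aestronglyMeasurable
  · have key : ‖x‖ ^ 2 ≤ 2 / b * Real.exp (b / 2 * ‖x‖ ^ 2) := by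
      have h1 := Real.add_one_le_exp (b / 2 * ‖x‖ ^ 2)
      have h2 := Real.exp_pos (b / 2 * ‖x‖ ^ 2)
      rw [div_mul_eq_mul_div, le_div_iff₀ hb]
      nlinarith
    have e1 : Real.exp (b / 2 * ‖x‖ ^ 2) * Real.exp (-b * ‖x‖ ^ 2)
        = Real.exp (-(b / 2) * ‖x‖ ^ 2) := by
      rw [← Real.exp_add]; ring_nf
    rw [Real.norm_eq_abs, abs_of_nonneg (by positivity)]
    calc ‖x‖ ^ 2 * Real.exp (-b * ‖x‖ ^ 2)
        ≤ 2 / b * Real.exp (b / 2 * ‖x‖ ^ 2) * Real.exp (-b * ‖x‖ ^ 2) :=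
          mul_le_mul_of_nonneg_right key (Real.exp_pos _).le
      _ = 2 / b * Real.exp (-(b / 2) * ‖x‖ ^ 2) := by rw [mul_assoc, e1]

private lemma gausson_gradient (N : ℕ) (c a : ℝ) (x : EuclideanSpace ℝ (Fin N)) :
    HasGradientAt (fun y : EuclideanSpace ℝ (Fin N) => Real.exp (c - a * ‖y‖ ^ 2 / 2))
      ((-a * Real.exp (c - a * ‖x‖ ^ 2 / 2)) • x) x := by
  set L := (fderivInnerCLM ℝ (x, x)).comp
    ((ContinuousLinearMap.id ℝ (EuclideanSpace ℝ (Fin N))).prod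
      (ContinuousLinearMap.id ℝ (EuclideanSpace ℝ (Fin N)))) with hL
  have hin : HasFDerivAt (fun y : EuclideanSpace ℝ (Fin N) => (inner ℝ y y : ℝ)) L x :=
    (hasFDerivAt_id x).inner ℝ (hasFDerivAt_id x)
  have hrw : (fun y : EuclideanSpace ℝ (Fin N) => c - a * ‖y‖ ^ 2 / 2)
      = fun y => c - a / 2 * (inner ℝ y y : ℝ) := by
    funext y; rw [real_inner_self_eq_norm_sq]; ring
  have hφ : HasFDerivAt (fun y : EuclideanSpace ℝ (Fin N) => c - a * ‖y‖ ^ 2 / 2)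
      ((a / 2) • (-L)) x := by
    rw [hrw]
    simpa using ((hin.const_mul (a / 2)).const_sub c)
  have hexp := hφ.exp
  rw [hasGradientAt_iff_hasFDerivAt]
  refine hexp.congr_fderiv ?_
  refine ContinuousLinearMap.ext fun v => ?_
  simp only [InnerProductSpace.toDual_apply_apply, ContinuousLinearMap.smul_apply,
    ContinuousLinearMap.neg_apply, hL, ContinuousLinearMap.comp_apply,
    ContinuousLinearMap.prod_apply, ContinuousLinearMap.coe_id', id_eq, fderivInnerCLM_apply,
    real_inner_smul_left, smul_eq_mul]
  rw [real_inner_comm v x]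
  ring

open Real in
private lemma final_alg (N : ℕ) (hN : 3 ≤ N) {a : ℝ} (ha : 0 < a) :
    (Real.exp ((N:ℝ)-1) * ((N:ℝ)/2) * a * (π/a) ^ ((N:ℝ)/2)) ^ ((N:ℝ)/((N:ℝ)-2))
    = (((2*(N:ℝ))/((N:ℝ)-2)) * ((N:ℝ)/2) ^ ((2:ℝ)/((N:ℝ)-2))
        * Real.exp (2*((N:ℝ)-1)/((N:ℝ)-2)) * π ^ ((N:ℝ)/((N:ℝ)-2)))
      * (Real.exp ((N:ℝ)-1) * (π/a) ^ ((N:ℝ)/2) * (((N:ℝ)-2)/4)) := by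
  have hN3 : (3:ℝ) ≤ (N:ℝ) := by exact_mod_cast hN
  have hq : (0:ℝ) < (N:ℝ) - 2 := by linarith
  have hπa : (0:ℝ) < π/a := by positivity
  set q : ℝ := (N:ℝ) - 2 with hqdef
  set p : ℝ := (N:ℝ)/q with hpdef
  have hexp1 : (N:ℝ)/2 * p = (N:ℝ)/2 + p := by
    rw [hpdef, hqdef]; field_simp [show (N:ℝ) - 2 ≠ 0 by linarith]; ring
  have hexp2 : ((N:ℝ)-1) * p = ((N:ℝ)-1) + 2*((N:ℝ)-1)/q := by
    rw [hpdef, hqdef]; field_simp [show (N:ℝ) - 2 ≠ 0 by linarith]; ring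
  have hp1 : p = 1 + 2/q := by rw [hpdef, hqdef]; field_simp [show (N:ℝ) - 2 ≠ 0 by linarith]; ring
  have h4 : ((N:ℝ)/2) ^ p = ((N:ℝ)/2) * ((N:ℝ)/2) ^ ((2:ℝ)/q) := by
    rw [hp1, Real.rpow_add (by positivity), Real.rpow_one]
  rw [Real.mul_rpow (by positivity) (by positivity),
    Real.mul_rpow (by positivity) (by positivity),
    Real.mul_rpow (by positivity) (by positivity),
    ← Real.exp_mul, ← Real.rpow_mul hπa.le, hexp1, Real.rpow_add hπa,
    hexp2, Real.exp_add, h4, (show (π/a) ^ p = π ^ p / a ^ p from Real.div_rpow pi_pos.le ha.le p)]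
  have hap : a ^ p ≠ 0 := (Real.rpow_pos_of_pos ha p).ne'
  have hqne : q ≠ 0 := hq.ne'
  field_simp
  ring

/-- Equality case of the optimal Sobolev-type inequality for the logarithmic
nonlinearity `G(s) = s² log|s|`: with the sharp constant
`C = (2N/(N-2)) (N/2)^{2/(N-2)} e^{2(N-1)/(N-2)} π^{N/(N-2)}`, every Gausson
`u_λ(x) = exp((N-1)/2 - λ²‖x‖²/2)` satisfies
`(∫ |∇u_λ|²)^{N/(N-2)} = C ∫ u_λ² log u_λ`. -/
theorem gausson_equality_in_optimal_inequality
    (N : ℕ) (hN : 3 ≤ N)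
    (C : ℝ)
    (hC : C = ((2 * N : ℝ) / (N - 2)) * ((N : ℝ) / 2) ^ ((2 : ℝ) / (N - 2))
        * Real.exp (2 * ((N : ℝ) - 1) / (N - 2)) * Real.pi ^ ((N : ℝ) / (N - 2)))
    (lam : ℝ) (hlam : 0 < lam)
    (u : EuclideanSpace ℝ (Fin N) → ℝ)
    (hu : ∀ x, u x = Real.exp (((N : ℝ) - 1) / 2 - lam ^ 2 * ‖x‖ ^ 2 / 2)) :
    (∫ x, ‖gradient u x‖ ^ 2) ^ ((N : ℝ) / (N - 2))
      = C * ∫ x, (u x) ^ 2 * Real.log (u x) := by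
  have hN0 : N ≠ 0 := by omega
  set π := Real.pi with hπ
  set a : ℝ := lam ^ 2 with hadef
  have ha : 0 < a := by positivity
  set c : ℝ := ((N : ℝ) - 1) / 2 with hcdef
  have hufun : u = fun y : EuclideanSpace ℝ (Fin N) => Real.exp (c - a * ‖y‖ ^ 2 / 2) := by
    funext y; rw [hu y]
  have hgrad : ∀ x : EuclideanSpace ℝ (Fin N),
      gradient u x = (-a * Real.exp (c - a * ‖x‖ ^ 2 / 2)) • x := by
    intro x
    rw [hufun]
    exact (gausson_gradient N c a x).gradient
  have hsq : ∀ x : EuclideanSpace ℝ (Fin N),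
      Real.exp (c - a * ‖x‖ ^ 2 / 2) ^ 2 = Real.exp (2 * c) * Real.exp (-a * ‖x‖ ^ 2) := by
    intro x
    rw [sq, ← Real.exp_add, ← Real.exp_add]
    ring_nf
  have hpt1 : ∀ x : EuclideanSpace ℝ (Fin N),
      ‖gradient u x‖ ^ 2
        = (a ^ 2 * Real.exp (2 * c)) * (‖x‖ ^ 2 * Real.exp (-a * ‖x‖ ^ 2)) := by
    intro x
    rw [hgrad x, norm_smul, Real.norm_eq_abs, mul_pow, sq_abs]
    rw [mul_pow, hsq x]
    ring
  have hLHS : ∫ x : EuclideanSpace ℝ (Fin N), ‖gradient u x‖ ^ 2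
      = Real.exp ((N:ℝ) - 1) * ((N:ℝ)/2) * a * Real.sqrt (π / a) ^ N := by
    simp_rw [hpt1]
    rw [integral_const_mul, int_gauss2 N hN0 ha]
    rw [show 2 * c = (N:ℝ) - 1 by rw [hcdef]; ring]
    field_simp
    ring
  have hpt2 : ∀ x : EuclideanSpace ℝ (Fin N),
      u x ^ 2 * Real.log (u x)
        = (Real.exp (2 * c) * c) * Real.exp (-a * ‖x‖ ^ 2)
          - (Real.exp (2 * c) * (a / 2)) * (‖x‖ ^ 2 * Real.exp (-a * ‖x‖ ^ 2)) := by
    intro x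
    rw [hufun]
    simp only [Real.log_exp, hsq x]
    ring
  have hRHS : ∫ x : EuclideanSpace ℝ (Fin N), u x ^ 2 * Real.log (u x)
      = Real.exp ((N:ℝ) - 1) * Real.sqrt (π / a) ^ N * (((N:ℝ) - 2) / 4) := by
    simp_rw [hpt2]
    rw [integral_sub ((intE0 N ha).const_mul _) ((intE2 N ha).const_mul _),
      integral_const_mul, integral_const_mul, int_gauss0 N ha, int_gauss2 N hN0 ha,
      show 2 * c = (N:ℝ) - 1 by rw [hcdef]; ring, hcdef]
    field_simp
    ring
  rw [hLHS, hRHS, hC]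
  have hSN : Real.sqrt (π / a) ^ N = (π / a) ^ ((N:ℝ)/2) := by
    rw [Real.sqrt_eq_rpow, ← Real.rpow_natCast ((π/a) ^ (1/2:ℝ)) N,
      ← Real.rpow_mul (by positivity)]
    congr 1
    ring
  rw [hSN]
  exact final_alg N hN ha
end

section
/- Let N ≥ 3, 2* = 2N/(N−2), and let p satisfy 2 < p < 2*. Define m₀ := ((N−2)(2*−p)/(N(p−2))) · (N(p−2)/(2p))^{(2*−2)/(2*−p)} and, for m ∈ ℝ, define G : ℝ → ℝ by G(s) = |s|^p/p − |s|^{2*}/2* − m s²/2. Then there exists ξ₀ > 0 with G(ξ₀) > 0 if and only if m < m₀. In particular, if m ≥ m₀ then G(s) ≤ 0 for every s ∈ ℝ. -/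
open MeasureTheory Filter Topology

lemma young_aux {α x : ℝ} (hα : 0 < α) (hx : 0 < x) :
    x ^ α * (α + 1 - α * x) ≤ 1 := by
  rcases le_or_gt (α + 1 - α * x) 0 with h | h
  · have hxa : 0 < x ^ α := Real.rpow_pos_of_pos hx α
    nlinarith
  · have hα1 : (0:ℝ) < α + 1 := by linarith
    have hw : α / (α + 1) + 1 / (α + 1) = 1 := by field_simp
    have hg := Real.geom_mean_le_arith_mean2_weighted (by positivity) (by positivity)
      hx.le h.le hw
    have hr : α / (α + 1) * x + 1 / (α + 1) * (α + 1 - α * x) = 1 := by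
      field_simp; ring
    rw [hr] at hg
    have h1 := Real.rpow_le_rpow (by positivity) hg hα1.le
    rw [Real.one_rpow, Real.mul_rpow (by positivity) (by positivity),
        ← Real.rpow_mul hx.le, ← Real.rpow_mul h.le,
        div_mul_cancel₀ _ hα1.ne', one_div, inv_mul_cancel₀ hα1.ne',
        Real.rpow_one] at h1
    exact h1

set_option maxHeartbeats 1000000
/-- For the double-power nonlinearity `G(s) = |s|^p/p - |s|^{2*}/2* - m s²/2`
(with `2 < p < 2* = 2N/(N-2)`), hypothesis (g2) — the existence of `ξ₀ > 0`
with `G(ξ₀) > 0` — holds if and only if `m < m₀`, where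
`m₀ = ((N-2)(2*-p)/(N(p-2))) (N(p-2)/(2p))^{(2*-2)/(2*-p)}`.
In particular, if `m ≥ m₀` then `G ≤ 0` everywhere. -/
theorem double_power_positivity_iff
    (N : ℕ) (hN : 3 ≤ N)
    (p twoStar m m₀ : ℝ)
    (h2s : twoStar = (2 * N : ℝ) / (N - 2))
    (hp : 2 < p) (hp' : p < twoStar)
    (hm₀ : m₀ = (((N : ℝ) - 2) * (twoStar - p) / (N * (p - 2)))
        * ((N * (p - 2)) / (2 * p)) ^ ((twoStar - 2) / (twoStar - p)))
    (G : ℝ → ℝ)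
    (hG : ∀ s : ℝ, G s = |s| ^ p / p - |s| ^ twoStar / twoStar - m * s ^ 2 / 2) :
    ((∃ ξ₀ : ℝ, 0 < ξ₀ ∧ 0 < G ξ₀) ↔ m < m₀) ∧
    (m₀ ≤ m → ∀ s : ℝ, G s ≤ 0) := by
  set q := twoStar with hq
  have hN3 : (3:ℝ) ≤ (N:ℝ) := by exact_mod_cast hN
  have hN2 : (0:ℝ) < (N:ℝ) - 2 := by linarith
  have hq2 : 2 < q := lt_trans hp hp'
  have hp0 : 0 < p := by linarith
  have hq0 : 0 < q := by linarith
  have hp2 : (0:ℝ) < p - 2 := by linarith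
  have hq2' : (0:ℝ) < q - 2 := by linarith
  have hqp : (0:ℝ) < q - p := by linarith
  -- N in terms of q
  have hqN : q * ((N:ℝ) - 2) = 2 * N := by
    rw [h2s, div_mul_cancel₀ _ hN2.ne']
  have hNval : (N:ℝ) = 2 * q / (q - 2) := by
    rw [eq_div_iff hq2'.ne']; nlinarith [hqN]
  have hN0 : (0:ℝ) < (N:ℝ) := by linarith
  -- key quantities
  set A : ℝ := q * (p - 2) / (p * (q - 2)) with hAdef
  have hA : 0 < A := by positivity
  set α : ℝ := (p - 2) / (q - p) with hαdef
  have hα : 0 < α := by positivity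
  have hbpos : 0 < A ^ α := Real.rpow_pos_of_pos hA α
  -- rewrite m₀
  have hAe : (N:ℝ) * (p - 2) / (2 * p) = A := by
    rw [hNval, hAdef]; field_simp
  have hexp : (q - 2) / (q - p) = α + 1 := by
    rw [hαdef]; field_simp; ring
  have hm₀2 : m₀ = A ^ α * (2 / (p * (q - 2))) * (q - p) := by
    rw [hm₀, hAe, hexp, Real.rpow_add hA, Real.rpow_one, hNval, hAdef]
    field_simp
    ring
  -- the structural identity for G at nonzero points
  have Gform : ∀ s : ℝ, s ≠ 0 →
      G s = |s| ^ 2 * (2 * (|s| ^ (p - 2) / p - |s| ^ (q - 2) / q) - m) / 2 := by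
    intro s hs
    have habs : 0 < |s| := abs_pos.mpr hs
    have e1 : |s| ^ p = |s| ^ (p - 2) * |s| ^ 2 := by
      rw [← Real.rpow_natCast |s| 2, ← Real.rpow_add habs]; norm_num
    have e2 : |s| ^ q = |s| ^ (q - 2) * |s| ^ 2 := by
      rw [← Real.rpow_natCast |s| 2, ← Real.rpow_add habs]; norm_num
    rw [hG, ← sq_abs s, e1, e2]
    field_simp
  -- key bound: for all t > 0, 2*(t^(p-2)/p - t^(q-2)/q) ≤ m₀
  have keyBound : ∀ t : ℝ, 0 < t → 2 * (t ^ (p - 2) / p - t ^ (q - 2) / q) ≤ m₀ := by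
    intro t ht
    set x : ℝ := t ^ (q - p) / A with hxdef
    have hx : 0 < x := by positivity
    have hxA : t ^ (q - p) = x * A := by rw [hxdef]; field_simp
    have htp : t ^ (p - 2) = x ^ α * A ^ α := by
      rw [← Real.mul_rpow hx.le hA.le, ← hxA, ← Real.rpow_mul ht.le]
      congr 1
      rw [hαdef]; field_simp
    have htq : t ^ (q - 2) = t ^ (p - 2) * t ^ (q - p) := by
      rw [← Real.rpow_add ht]; ring_nf
    have hyoung := young_aux hα hx
    have key : x ^ α * ((q - 2) - (p - 2) * x) ≤ q - p := by
      have h2 := mul_le_mul_of_nonneg_left hyoung hqp.le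
      have h3 : (q - p) * (x ^ α * (α + 1 - α * x)) = x ^ α * ((q - 2) - (p - 2) * x) := by
        rw [hαdef]; field_simp; try ring
      rw [h3, mul_one] at h2
      exact h2
    have lhs_eq : 2 * (t ^ (p - 2) / p - t ^ (q - 2) / q)
        = A ^ α * (2 / (p * (q - 2))) * (x ^ α * ((q - 2) - (p - 2) * x)) := by
      rw [htq, htp, hxA, hAdef]
      field_simp
    rw [lhs_eq, hm₀2]
    exact mul_le_mul_of_nonneg_left key (by positivity)
  -- the maximizer
  set t₀ : ℝ := A ^ ((q - p)⁻¹) with ht₀def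
  have ht₀ : 0 < t₀ := Real.rpow_pos_of_pos hA _
  have ht₀qp : t₀ ^ (q - p) = A := by
    rw [ht₀def, ← Real.rpow_mul hA.le, inv_mul_cancel₀ hqp.ne', Real.rpow_one]
  have keyEq : 2 * (t₀ ^ (p - 2) / p - t₀ ^ (q - 2) / q) = m₀ := by
    have htp : t₀ ^ (p - 2) = A ^ α := by
      rw [← ht₀qp, ← Real.rpow_mul ht₀.le]
      congr 1
      rw [hαdef]; field_simp
    have htq : t₀ ^ (q - 2) = A ^ α * A := by
      rw [← htp, ← ht₀qp, ← Real.rpow_add ht₀]; ring_nf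
    rw [htp, htq, hm₀2, hAdef]
    field_simp
    ring
  constructor
  · constructor
    · rintro ⟨ξ, hξ, hGξ⟩
      rw [Gform ξ hξ.ne'] at hGξ
      have habs : 0 < |ξ| := abs_pos.mpr hξ.ne'
      have hb := keyBound |ξ| habs
      set T := 2 * (|ξ| ^ (p - 2) / p - |ξ| ^ (q - 2) / q) with hT
      have hsq : 0 < |ξ| ^ 2 := by positivity
      have : 0 < T - m := by nlinarith
      linarith
    · intro hm
      refine ⟨t₀, ht₀, ?_⟩
      rw [Gform t₀ ht₀.ne', abs_of_pos ht₀, keyEq]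
      have h1 : 0 < m₀ - m := by linarith
      have h2 : 0 < t₀ ^ 2 := by positivity
      positivity
  · intro hm s
    rcases eq_or_ne s 0 with rfl | hs
    · rw [hG]
      simp [Real.zero_rpow hp0.ne', Real.zero_rpow hq0.ne']
    · rw [Gform s hs]
      have habs : 0 < |s| := abs_pos.mpr hs
      have hb := keyBound |s| habs
      have hsq : 0 < |s| ^ 2 := by positivity
      nlinarith
end
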